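/- If s1 := s·μ/θ1 is a natural number, then the subchain-1 distribution has the shifted Poisson form: for every 0 ≤ k ≤ n1, π^1_{s+k}/π^1_s = R1^k · s1! / (s1+k)!, where R1 = λ/θ1; equivalently, π^1_{s+k} is proportional to e^{−R1}·R1^{s1+k}/(s1+k)!, the Poisson(R1) probability mass at s1+k. (Subchain-1 form established in the proof of Proposition 3.) -/

import Mathlib

open Finset

/-- Departure rate of the two-stage reneging birth-death chain. -/
noncomputable def depRate (s n1 : ℕ) (μ θ1 θ2 : ℝ) (k : ℕ) : ℝ :=
  if k ≤ s then (k : ℝ) * μ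
  else if k ≤ s + n1 then (s : ℝ) * μ + ((k : ℝ) - (s : ℝ)) * θ1
  else (s : ℝ) * μ + (n1 : ℝ) * θ1 + ((k : ℝ) - (s : ℝ) - (n1 : ℝ)) * θ2

/-- Stationary probability of state `k` in the subchain with state set `A`. -/
noncomputable def subProb (π : ℕ → ℝ) (A : Finset ℕ) (k : ℕ) : ℝ :=
  π k / ∑ k' ∈ A, π k'

theorem stmt_18 (lam μ θ1 θ2 : ℝ) (hlam : 0 < lam) (hμ : 0 < μ)
    (hθ1 : 0 < θ1) (hθ2 : 0 < θ2) (s n1 n2 : ℕ) (hs : 1 ≤ s) (π : ℕ → ℝ)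
    (hpos : ∀ k ∈ Finset.Icc 0 (s + n1 + n2), 0 < π k)
    (hbal : ∀ k, 1 ≤ k → k ≤ s + n1 + n2 →
      π k * depRate s n1 μ θ1 θ2 k = π (k - 1) * lam)
    (hsum : ∑ k ∈ Finset.Icc 0 (s + n1 + n2), π k = 1)
    (s1 : ℕ) (hs1 : (s1 : ℝ) = (s : ℝ) * μ / θ1) :
    (∀ k ≤ n1, subProb π (Finset.Icc s (s + n1)) (s + k) / (subProb π (Finset.Icc s (s + n1)) s) =
        (lam / θ1) ^ k * (Nat.factorial s1 : ℝ) / (Nat.factorial (s1 + k) : ℝ)) ∧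
    ∃ C : ℝ, ∀ k ≤ n1, subProb π (Finset.Icc s (s + n1)) (s + k) =
        C * (Real.exp (-(lam / θ1)) * (lam / θ1) ^ (s1 + k) / (Nat.factorial (s1 + k) : ℝ)) := by
  have hsμ : (s : ℝ) * μ = (s1 : ℝ) * θ1 := by
    rw [hs1]; field_simp
  -- the key recursion
  have key : ∀ k ≤ n1, π (s + k) =
      π s * (lam / θ1) ^ k * (Nat.factorial s1 : ℝ) / (Nat.factorial (s1 + k) : ℝ) := by
    intro k hk
    induction k with
    | zero =>
      have : (Nat.factorial s1 : ℝ) ≠ 0 := Nat.cast_ne_zero.2 (Nat.factorial_ne_zero s1)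
      field_simp
      simp
    | succ k ih =>
      have hk' : k ≤ n1 := Nat.le_of_succ_le hk
      have ihv := ih hk'
      have h1 : 1 ≤ s + (k + 1) := by omega
      have h2 : s + (k + 1) ≤ s + n1 + n2 := by omega
      have hb := hbal (s + (k + 1)) h1 h2
      have hrate : depRate s n1 μ θ1 θ2 (s + (k + 1)) = ((s1 : ℝ) + (k + 1)) * θ1 := by
        unfold depRate
        have hA : ¬ (s + (k + 1) ≤ s) := by omega
        have hB : s + (k + 1) ≤ s + n1 := by omega
        rw [if_neg hA, if_pos hB, hsμ]
        push_cast
        ring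
      rw [hrate] at hb
      have hπk : π (s + (k + 1) - 1) = π (s + k) := rfl
      rw [hπk, ihv] at hb
      have hrne : ((s1 : ℝ) + (k + 1)) * θ1 ≠ 0 := by positivity
      have hfac : (Nat.factorial (s1 + (k + 1)) : ℝ) =
          ((s1 : ℝ) + (k + 1)) * (Nat.factorial (s1 + k) : ℝ) := by
        have : s1 + (k + 1) = (s1 + k) + 1 := by omega
        rw [this, Nat.factorial_succ]
        push_cast; ring
      have hfne : (Nat.factorial (s1 + k) : ℝ) ≠ 0 := Nat.cast_ne_zero.2 (Nat.factorial_ne_zero _)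
      have hx : π (s + (k + 1)) =
          (π s * (lam / θ1) ^ k * (Nat.factorial s1 : ℝ) / (Nat.factorial (s1 + k) : ℝ) * lam) /
            (((s1 : ℝ) + (k + 1)) * θ1) := (eq_div_iff hrne).2 hb
      rw [hx, hfac]
      have hθne : θ1 ≠ 0 := ne_of_gt hθ1
      simp only [div_pow]
      field_simp
      ring
  -- positivity of the normalizer
  have hsub : Finset.Icc s (s + n1) ⊆ Finset.Icc 0 (s + n1 + n2) := by
    intro x hx
    simp only [Finset.mem_Icc] at *
    omega
  have hS : 0 < ∑ k' ∈ Finset.Icc s (s + n1), π k' := by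
    apply Finset.sum_pos
    · intro i hi; exact hpos i (hsub hi)
    · exact ⟨s, by simp⟩
  have hπs : 0 < π s := hpos s (by simp only [Finset.mem_Icc]; omega)
  have hR : (0:ℝ) < lam / θ1 := by positivity
  constructor
  · intro k hk
    rw [subProb, subProb, key k hk]
    have hSne := ne_of_gt hS
    have hπne := ne_of_gt hπs
    have hfne : (Nat.factorial (s1 + k) : ℝ) ≠ 0 := Nat.cast_ne_zero.2 (Nat.factorial_ne_zero _)
    field_simp
  · refine ⟨(π s / ∑ k' ∈ Finset.Icc s (s + n1), π k') * (Nat.factorial s1 : ℝ) *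
      Real.exp (lam / θ1) / (lam / θ1) ^ s1, ?_⟩
    intro k hk
    rw [subProb, key k hk, pow_add]
    rw [Real.exp_neg]
    have he : Real.exp (lam/θ1) ≠ 0 := Real.exp_ne_zero _
    have hRne : (lam / θ1) ≠ 0 := ne_of_gt hR
    field_simp
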